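/- Let α be a real number with α > 0 and α ≠ 1, set γ = (1−α)/(2α), let ρ, σ be positive definite n×n complex matrices, and let M be a Hermitian matrix. Then the real function t ↦ D̃_α(ρ+tM, σ), defined for t in a neighborhood of 0 on which ρ+tM is positive definite, is differentiable at t = 0 with derivative (α/(α−1))·tr[(σ^γ·ρ·σ^γ)^α]⁻¹·tr(σ^γ·(σ^γ·ρ·σ^γ)^{α−1}·σ^γ·M). -/

import Mathlib

open Matrix
open scoped ComplexOrder

/-- The real power `A^t` of a Hermitian matrix, via the continuous functional calculus. -/
noncomputable def matPow {n : Type*} [Fintype n] [DecidableEq n]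
    (A : Matrix n n ℂ) (t : ℝ) : Matrix n n ℂ :=
  cfc (fun x : ℝ => x ^ t) A

/-- The sandwiched Rényi relative entropy
`D̃_α(ρ,σ) = (α−1)⁻¹ log tr[(σ^γ ρ σ^γ)^α]`, `γ = (1−α)/(2α)`. -/
noncomputable def sandwichedRenyi {n : Type*} [Fintype n] [DecidableEq n]
    (α : ℝ) (ρ σ : Matrix n n ℂ) : ℝ :=
  (α - 1)⁻¹ * Real.log
    (((matPow (matPow σ ((1 - α) / (2 * α)) * ρ * matPow σ ((1 - α) / (2 * α))) α).trace).re)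

section Helpers

open Polynomial

set_option linter.unusedSectionVars false

variable {n : Type*} [Fintype n] [DecidableEq n]


/-- Conjugation by a unitary matrix as an `ℝ`-algebra homomorphism. -/
noncomputable def conjAH (U : Matrix.unitaryGroup n ℂ) : Matrix n n ℂ →ₐ[ℝ] Matrix n n ℂ where
  toFun M := (U : Matrix n n ℂ) * M * star (U : Matrix n n ℂ)
  map_one' := by
    show (U : Matrix n n ℂ) * 1 * star (U : Matrix n n ℂ) = 1
    rw [mul_one]
    exact mem_unitaryGroup_iff.mp U.2
  map_mul' M N := by
    show (U:Matrix n n ℂ) * (M * N) * star (U:Matrix n n ℂ)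
      = ((U:Matrix n n ℂ) * M * star (U:Matrix n n ℂ)) * ((U:Matrix n n ℂ) * N * star (U:Matrix n n ℂ))
    have h : star (U : Matrix n n ℂ) * (U : Matrix n n ℂ) = 1 := UnitaryGroup.star_mul_self U
    calc (U:Matrix n n ℂ) * (M * N) * star (U:Matrix n n ℂ)
        = (U:Matrix n n ℂ) * M * (star (U:Matrix n n ℂ) * (U:Matrix n n ℂ)) * N * star (U:Matrix n n ℂ) := by
          rw [h]; noncomm_ring
      _ = ((U:Matrix n n ℂ) * M * star (U:Matrix n n ℂ)) * ((U:Matrix n n ℂ) * N * star (U:Matrix n n ℂ)) := by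
          noncomm_ring
  map_zero' := by
    show (U : Matrix n n ℂ) * 0 * star (U : Matrix n n ℂ) = 0
    simp
  map_add' M N := by
    show (U:Matrix n n ℂ) * (M + N) * star (U:Matrix n n ℂ) = _ + _
    noncomm_ring
  commutes' r := by
    show (U : Matrix n n ℂ) * algebraMap ℝ (Matrix n n ℂ) r * star (U : Matrix n n ℂ) = _
    rw [Algebra.algebraMap_eq_smul_one, mul_smul_comm, mul_one, smul_mul_assoc,
      mem_unitaryGroup_iff.mp U.2]

lemma conjAH_apply (U : Matrix.unitaryGroup n ℂ) (M : Matrix n n ℂ) :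
    conjAH U M = (U : Matrix n n ℂ) * M * star (U : Matrix n n ℂ) := rfl

lemma aeval_spectral {X : Matrix n n ℂ} (hX : X.IsHermitian) (Q : ℝ[X]) :
    aeval X Q = (hX.eigenvectorUnitary : Matrix n n ℂ) *
      diagonal (fun i => ((Q.eval (hX.eigenvalues i) : ℝ) : ℂ)) *
      star (hX.eigenvectorUnitary : Matrix n n ℂ) := by
  have h0 : X = conjAH hX.eigenvectorUnitary (diagonal (RCLike.ofReal ∘ hX.eigenvalues)) :=
    hX.spectral_theorem
  conv_lhs => rw [h0]
  rw [Polynomial.aeval_algHom_apply]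
  have h1 : (diagonal (RCLike.ofReal ∘ hX.eigenvalues) : Matrix n n ℂ)
      = Matrix.diagonalAlgHom ℝ (RCLike.ofReal ∘ hX.eigenvalues) := rfl
  rw [h1, Polynomial.aeval_algHom_apply]
  have h2 : (aeval (RCLike.ofReal ∘ hX.eigenvalues : n → ℂ)) Q
      = fun i => ((Q.eval (hX.eigenvalues i) : ℝ) : ℂ) := by
    funext i
    have h3 := Polynomial.aeval_algHom_apply (Pi.evalAlgHom ℝ (fun _ : n => ℂ) i)
      (RCLike.ofReal ∘ hX.eigenvalues : n → ℂ) Q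
    simp only [Pi.evalAlgHom_apply] at h3
    rw [← h3]
    have h4 : ((RCLike.ofReal ∘ hX.eigenvalues : n → ℂ) i) = algebraMap ℝ ℂ (hX.eigenvalues i) := by
      simp [Complex.coe_algebraMap]
    rw [h4, Polynomial.aeval_algebraMap_apply]
    simp [Complex.coe_algebraMap]
  rw [h2]
  rfl

lemma cfc_spectral {X : Matrix n n ℂ} (hX : X.IsHermitian) (f : ℝ → ℝ) :
    cfc f X = (hX.eigenvectorUnitary : Matrix n n ℂ) *
      diagonal (fun i => ((f (hX.eigenvalues i) : ℝ) : ℂ)) *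
      star (hX.eigenvectorUnitary : Matrix n n ℂ) := by
  rw [hX.cfc_eq]
  rfl

lemma trace_conj_diag (U : Matrix.unitaryGroup n ℂ) (d : n → ℝ) :
    (((U : Matrix n n ℂ) * diagonal (fun i => ((d i : ℝ) : ℂ)) * star (U : Matrix n n ℂ)).trace)
      = ∑ i, ((d i : ℝ) : ℂ) := by
  rw [trace_mul_cycle, UnitaryGroup.star_mul_self U, one_mul, trace_diagonal]

lemma trace_diagonal_mul (d : n → ℂ) (C : Matrix n n ℂ) :
    ((diagonal d * C).trace) = ∑ i, d i * C i i := by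
  simp [Matrix.trace, Matrix.diag, diagonal_mul]

lemma trace_conj_diag_mul (U : Matrix.unitaryGroup n ℂ) (d : n → ℝ) (B : Matrix n n ℂ) :
    ((((U : Matrix n n ℂ) * diagonal (fun i => ((d i : ℝ) : ℂ)) * star (U : Matrix n n ℂ)) * B).trace)
      = ∑ i, ((d i : ℝ) : ℂ) * ((star (U : Matrix n n ℂ) * B * (U : Matrix n n ℂ)) i i) := by
  have h : ((U : Matrix n n ℂ) * diagonal (fun i => ((d i : ℝ) : ℂ)) * star (U : Matrix n n ℂ)) * B
      = (U : Matrix n n ℂ) * (diagonal (fun i => ((d i : ℝ) : ℂ)) * (star (U : Matrix n n ℂ) * B)) := by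
    noncomm_ring
  rw [h, trace_mul_comm, mul_assoc, trace_diagonal_mul]

lemma psd_diag_entry_nonneg {P : Matrix n n ℂ} (hP : P.PosSemidef) (i : n) :
    0 ≤ P i i := by
  simpa [mulVec_single, dotProduct, Pi.single_apply, apply_ite, Finset.sum_ite_eq]
    using hP.dotProduct_mulVec_nonneg (Pi.single i 1)

lemma smul_one_conj (U : Matrix.unitaryGroup n ℂ) (c : ℂ) :
    (c • 1 : Matrix n n ℂ) = (U : Matrix n n ℂ) * (c • 1) * star (U : Matrix n n ℂ) := by
  rw [mul_smul_comm, mul_one, smul_mul_assoc, mem_unitaryGroup_iff.mp U.2]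

lemma conj_psd_diag (U : Matrix.unitaryGroup n ℂ) {d : n → ℝ} (hd : ∀ i, 0 ≤ d i) :
    ((U : Matrix n n ℂ) * diagonal (fun i => ((d i : ℝ) : ℂ)) * star (U : Matrix n n ℂ)).PosSemidef := by
  have h : (diagonal (fun i => ((d i : ℝ) : ℂ)) : Matrix n n ℂ).PosSemidef :=
    posSemidef_diagonal_iff.mpr fun i => by
      rw [Complex.zero_le_real]; exact hd i
  simpa [Matrix.star_eq_conjTranspose] using h.mul_mul_conjTranspose_same (U : Matrix n n ℂ)

lemma psd_smul_one_sub {B : Matrix n n ℂ} (hB : B.IsHermitian) {K : ℝ}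
    (h : ∀ i, hB.eigenvalues i ≤ K) :
    (((K : ℂ) • 1 : Matrix n n ℂ) - B).PosSemidef := by
  have h1 : ((K : ℂ) • 1 : Matrix n n ℂ) - B
      = (hB.eigenvectorUnitary : Matrix n n ℂ)
        * diagonal (fun i => ((K - hB.eigenvalues i : ℝ) : ℂ))
        * star (hB.eigenvectorUnitary : Matrix n n ℂ) := by
    conv_lhs => rw [hB.spectral_theorem, Unitary.conjStarAlgAut_apply, smul_one_conj hB.eigenvectorUnitary (K : ℂ)]
    rw [← sub_mul, ← mul_sub]
    congr 1
    congr 1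
    ext i j
    by_cases hij : i = j <;>
      simp [hij, diagonal_apply, Matrix.one_apply, Matrix.smul_apply, Complex.ofReal_sub]
  rw [h1]
  exact conj_psd_diag _ fun i => by linarith [h i]

lemma psd_smul_one_add {B : Matrix n n ℂ} (hB : B.IsHermitian) {K : ℝ}
    (h : ∀ i, -K ≤ hB.eigenvalues i) :
    (((K : ℂ) • 1 : Matrix n n ℂ) + B).PosSemidef := by
  have h1 : ((K : ℂ) • 1 : Matrix n n ℂ) + B
      = (hB.eigenvectorUnitary : Matrix n n ℂ)
        * diagonal (fun i => ((K + hB.eigenvalues i : ℝ) : ℂ))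
        * star (hB.eigenvectorUnitary : Matrix n n ℂ) := by
    conv_lhs => rw [hB.spectral_theorem, Unitary.conjStarAlgAut_apply, smul_one_conj hB.eigenvectorUnitary (K : ℂ)]
    rw [← add_mul, ← mul_add]
    congr 1
    congr 1
    ext i j
    by_cases hij : i = j <;>
      simp [hij, diagonal_apply, Matrix.one_apply, Matrix.smul_apply, Complex.ofReal_add]
  rw [h1]
  exact conj_psd_diag _ fun i => by linarith [h i]

/-- quadratic form bound: K-shifted PSD implies diagonal entries of conjugates bounded -/
lemma conj_diag_entry_bound {B : Matrix n n ℂ} {K : ℝ}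
    (h1 : (((K : ℂ) • 1 : Matrix n n ℂ) - B).PosSemidef)
    (h2 : (((K : ℂ) • 1 : Matrix n n ℂ) + B).PosSemidef)
    (U : Matrix.unitaryGroup n ℂ) (i : n) :
    |((star (U : Matrix n n ℂ) * B * (U : Matrix n n ℂ)) i i).re| ≤ K := by
  set C := star (U : Matrix n n ℂ) * B * (U : Matrix n n ℂ) with hC
  have key : ∀ {D : Matrix n n ℂ}, (((K : ℂ) • 1 : Matrix n n ℂ) + D).PosSemidef →
      0 ≤ K + (star (U : Matrix n n ℂ) * D * (U : Matrix n n ℂ)) i i := by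
    intro D hD
    have hconj : (star (U : Matrix n n ℂ) * (((K : ℂ) • 1 : Matrix n n ℂ) + D) * (U : Matrix n n ℂ)).PosSemidef := by
      simpa [Matrix.star_eq_conjTranspose] using
        hD.mul_mul_conjTranspose_same (star (U : Matrix n n ℂ))
    have heq : star (U : Matrix n n ℂ) * (((K : ℂ) • 1 : Matrix n n ℂ) + D) * (U : Matrix n n ℂ)
        = (K : ℂ) • 1 + star (U : Matrix n n ℂ) * D * (U : Matrix n n ℂ) := by
      rw [mul_add, add_mul, mul_smul_comm, mul_one, smul_mul_assoc,
        UnitaryGroup.star_mul_self U]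
    rw [heq] at hconj
    have := psd_diag_entry_nonneg hconj i
    simpa [Matrix.smul_apply, Matrix.one_apply] using this
  have hplus := key h2
  have hminus : 0 ≤ K + (star (U : Matrix n n ℂ) * (-B) * (U : Matrix n n ℂ)) i i := by
    apply key
    simpa [sub_eq_add_neg] using h1
  rw [abs_le]
  constructor
  · have := (Complex.le_def.mp hplus).1
    simp only [Complex.add_re, Complex.ofReal_re, Complex.zero_re] at this
    linarith
  · have h3 : (star (U : Matrix n n ℂ) * (-B) * (U : Matrix n n ℂ)) i i = -(C i i) := by
      simp [hC, Matrix.mul_assoc]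
    rw [h3] at hminus
    have := (Complex.le_def.mp hminus).1
    simp only [Complex.add_re, Complex.ofReal_re, Complex.neg_re, Complex.zero_re] at this
    linarith

lemma eig_le_of_psd {X : Matrix n n ℂ} (hX : X.IsHermitian) {c : ℝ}
    (h : (((c : ℂ) • 1 : Matrix n n ℂ) - X).PosSemidef) (i : n) : hX.eigenvalues i ≤ c := by
  set v : n → ℂ := (WithLp.equiv 2 (n → ℂ)) (hX.eigenvectorBasis i) with hv
  have hXv : X *ᵥ v = hX.eigenvalues i • v := hX.mulVec_eigenvectorBasis i
  have hv0 : v ≠ 0 := by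
    intro h0
    exact hX.eigenvectorBasis.orthonormal.ne_zero i (by
      apply (WithLp.equiv 2 (n → ℂ)).injective
      exact h0)
  have hp : 0 < star v ⬝ᵥ v := dotProduct_star_self_pos_iff.mpr hv0
  have hq := h.dotProduct_mulVec_nonneg v
  have hcalc : star v ⬝ᵥ ((((c : ℂ) • 1 : Matrix n n ℂ) - X) *ᵥ v)
      = ((c - hX.eigenvalues i : ℝ) : ℂ) * (star v ⬝ᵥ v) := by
    have h5 : (hX.eigenvalues i • v : n → ℂ) = ((hX.eigenvalues i : ℝ) : ℂ) • v := by
      ext j; simp [Complex.real_smul]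
    rw [sub_mulVec, dotProduct_sub, hXv, h5]
    simp only [smul_mulVec, one_mulVec, dotProduct_smul, smul_eq_mul]
    push_cast
    ring
  rw [hcalc] at hq
  have hpre : 0 < (star v ⬝ᵥ v).re ∧ (star v ⬝ᵥ v).im = 0 := by
    have := Complex.lt_def.mp hp
    constructor
    · simpa using this.1
    · simpa using this.2.symm
  have hre := (Complex.le_def.mp hq).1
  rw [Complex.mul_re, Complex.ofReal_re, Complex.ofReal_im, hpre.2] at hre
  simp only [Complex.zero_re, zero_mul, sub_zero, mul_zero] at hre
  nlinarith [hpre.1]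

lemma eig_ge_of_psd {X : Matrix n n ℂ} (hX : X.IsHermitian) {c : ℝ}
    (h : (X - ((c : ℂ) • 1 : Matrix n n ℂ)).PosSemidef) (i : n) : c ≤ hX.eigenvalues i := by
  set v : n → ℂ := (WithLp.equiv 2 (n → ℂ)) (hX.eigenvectorBasis i) with hv
  have hXv : X *ᵥ v = hX.eigenvalues i • v := hX.mulVec_eigenvectorBasis i
  have hv0 : v ≠ 0 := by
    intro h0
    exact hX.eigenvectorBasis.orthonormal.ne_zero i (by
      apply (WithLp.equiv 2 (n → ℂ)).injective
      exact h0)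
  have hp : 0 < star v ⬝ᵥ v := dotProduct_star_self_pos_iff.mpr hv0
  have hq := h.dotProduct_mulVec_nonneg v
  have hcalc : star v ⬝ᵥ ((X - ((c : ℂ) • 1 : Matrix n n ℂ)) *ᵥ v)
      = ((hX.eigenvalues i - c : ℝ) : ℂ) * (star v ⬝ᵥ v) := by
    have h5 : (hX.eigenvalues i • v : n → ℂ) = ((hX.eigenvalues i : ℝ) : ℂ) • v := by
      ext j; simp [Complex.real_smul]
    rw [sub_mulVec, dotProduct_sub, hXv, h5]
    simp only [smul_mulVec, one_mulVec, dotProduct_smul, smul_eq_mul]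
    push_cast
    ring
  rw [hcalc] at hq
  have hpre : 0 < (star v ⬝ᵥ v).re ∧ (star v ⬝ᵥ v).im = 0 := by
    have := Complex.lt_def.mp hp
    constructor
    · simpa using this.1
    · simpa using this.2.symm
  have hre := (Complex.le_def.mp hq).1
  rw [Complex.mul_re, Complex.ofReal_re, Complex.ofReal_im, hpre.2] at hre
  simp only [Complex.zero_re, zero_mul, sub_zero, mul_zero] at hre
  nlinarith [hpre.1]

attribute [local instance] Matrix.linftyOpNormedRing Matrix.linftyOpNormedAlgebra

noncomputable def traceReCLM : Matrix n n ℂ →L[ℝ] ℝ :=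
  (Complex.reCLM.comp ((Matrix.traceLinearMap n ℝ ℂ).toContinuousLinearMap))

@[simp] lemma traceReCLM_apply (M : Matrix n n ℂ) : traceReCLM M = (M.trace).re := rfl

/-- derivative of the affine matrix path -/
lemma hasDerivAt_path (A B : Matrix n n ℂ) (t : ℝ) :
    HasDerivAt (fun t : ℝ => A + t • B) B t := by
  exact (((hasDerivAt_id t).smul_const B).const_add A).congr_deriv (one_smul ℝ B)

lemma hasDerivAt_pow_path (A B : Matrix n n ℂ) (t : ℝ) (k : ℕ) :
    HasDerivAt (fun t : ℝ => (A + t • B) ^ k)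
      (∑ j ∈ Finset.range k, (A + t • B) ^ j * B * (A + t • B) ^ (k - 1 - j)) t := by
  induction k with
  | zero =>
    rw [Finset.sum_range_zero]; simp only [pow_zero]; exact hasDerivAt_const t (1 : Matrix n n ℂ)
  | succ k ih =>
    have h := ih.mul (hasDerivAt_path A B t)
    have heq : (fun t : ℝ => (A + t • B) ^ k * (A + t • B)) = fun t : ℝ => (A + t • B) ^ (k + 1) := by
      funext s; rw [← pow_succ]
    rw [← heq]
    convert h using 1
    · rfl
    · rfl
    · rfl
    · rfl
    rw [Finset.sum_range_succ]
    congr 1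
    · rw [Finset.sum_mul]
      refine Finset.sum_congr rfl fun j hj => ?_
      have hj' : j < k := Finset.mem_range.mp hj
      have h1 : k + 1 - 1 - j = (k - 1 - j) + 1 := by omega
      rw [h1, pow_succ, ← mul_assoc]
    · simp


lemma hasDerivAt_trace_pow (A B : Matrix n n ℂ) (t : ℝ) (k : ℕ) :
    HasDerivAt (fun t : ℝ => (((A + t • B) ^ k).trace).re)
      ((k : ℝ) * (((A + t • B) ^ (k - 1) * B).trace).re) t := by
  have h := (traceReCLM (n := n)).hasFDerivAt.comp_hasDerivAt t (hasDerivAt_pow_path A B t k)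
  convert h using 1
  · rfl
  · rfl
  · rfl
  show _ = ((∑ j ∈ Finset.range k, (A + t • B) ^ j * B * (A + t • B) ^ (k - 1 - j)).trace).re
  simp only [traceReCLM_apply, trace_sum, map_sum, Complex.re_sum]
  have hterm : ∀ j ∈ Finset.range k,
      ((((A + t • B) ^ j * B * (A + t • B) ^ (k - 1 - j)).trace)).re
        = (((A + t • B) ^ (k - 1) * B).trace).re := by
    intro j hj
    have hj' : j < k := Finset.mem_range.mp hj
    rw [trace_mul_cycle]
    have : (A + t • B) ^ (k - 1 - j) * (A + t • B) ^ j = (A + t • B) ^ (k - 1) := by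
      rw [← pow_add]
      congr 1
      omega
    rw [this]
  rw [Finset.sum_congr rfl hterm, Finset.sum_const, Finset.card_range]
  simp [nsmul_eq_mul]

lemma trace_re_smul (a : ℝ) (M : Matrix n n ℂ) : ((a • M).trace).re = a * (M.trace).re := by
  rw [Matrix.trace_smul]
  simp [Complex.real_smul]

lemma aeval_monomial_matrix (X : Matrix n n ℂ) (k : ℕ) (a : ℝ) :
    (aeval X) (monomial k a) = a • X ^ k := by
  rw [aeval_monomial, Algebra.algebraMap_eq_smul_one, smul_mul_assoc, one_mul]

lemma hasDerivAt_trace_aeval (A B : Matrix n n ℂ) (Q : ℝ[X]) (t : ℝ) :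
    HasDerivAt (fun t : ℝ => (((aeval (A + t • B)) Q).trace).re)
      ((((aeval (A + t • B)) (derivative Q) * B).trace).re) t := by
  induction Q using Polynomial.induction_on' with
  | add p q hp hq =>
    have h := hp.add hq
    convert h using 1
    · rfl
    · rfl
    · funext s
      simp [map_add, Matrix.trace_add]
    · simp [map_add, Matrix.trace_add, add_mul]
  | monomial k a =>
    have h := (hasDerivAt_trace_pow A B t k).const_mul a
    convert h using 1
    · rfl
    · rfl
    · funext s
      rw [aeval_monomial_matrix, trace_re_smul]
    · rw [derivative_monomial, aeval_monomial_matrix, smul_mul_assoc, trace_re_smul]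
      ring

lemma exists_antideriv (q : ℝ[X]) : ∃ Q : ℝ[X], derivative Q = q := by
  induction q using Polynomial.induction_on' with
  | add p q hp hq =>
    obtain ⟨P, hP⟩ := hp
    obtain ⟨R, hR⟩ := hq
    exact ⟨P + R, by simp [hP, hR]⟩
  | monomial k a =>
    refine ⟨monomial (k + 1) (a / (k + 1)), ?_⟩
    rw [derivative_monomial]
    simp only [Nat.add_sub_cancel]
    congr 1
    have : ((k : ℝ) + 1) ≠ 0 := by positivity
    push_cast
    field_simp

lemma mvt_bound {f fd : ℝ → ℝ} {m L ε : ℝ} (Q : ℝ[X])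
    (hf : ∀ x ∈ Set.Icc m L, HasDerivAt f (fd x) x)
    (hq : ∀ x ∈ Set.Icc m L, |(derivative Q).eval x - fd x| ≤ ε)
    {x : ℝ} (hx : x ∈ Set.Icc m L) (hm : m ∈ Set.Icc m L) :
    |(Q.eval x + (f m - Q.eval m)) - f x| ≤ ε * (L - m) := by
  set h : ℝ → ℝ := fun y => Q.eval y - f y with hh
  have hder : ∀ y ∈ Set.Icc m L, HasDerivWithinAt h ((derivative Q).eval y - fd y) (Set.Icc m L) y :=
    fun y hy => (((Q.hasDerivAt y).sub (hf y hy)).hasDerivWithinAt)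
  have hbound : ∀ y ∈ Set.Icc m L, ‖(derivative Q).eval y - fd y‖ ≤ ε := fun y hy => hq y hy
  have := (convex_Icc m L).norm_image_sub_le_of_norm_hasDerivWithin_le hder hbound hm hx
  have habs : |h x - h m| ≤ ε * |x - m| := by simpa [Real.norm_eq_abs] using this
  have h1 : (Q.eval x + (f m - Q.eval m)) - f x = h x - h m := by simp [hh]; ring
  rw [h1]
  refine le_trans habs ?_
  have hε : 0 ≤ ε := le_trans (abs_nonneg _) (hq m hm)
  have : |x - m| ≤ L - m := by
    rw [abs_le]
    constructor <;> [linarith [hx.1, hx.2, hm.1]; linarith [hx.2]]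
  nlinarith

lemma real_smul_matrix (t : ℝ) (B : Matrix n n ℂ) : t • B = (t : ℂ) • B := by
  ext i j
  simp [Complex.real_smul]

lemma isHermitian_real_smul {B : Matrix n n ℂ} (hB : B.IsHermitian) (t : ℝ) :
    (t • B).IsHermitian := by
  rw [real_smul_matrix]
  show ((t : ℂ) • B).conjTranspose = _
  rw [conjTranspose_smul, hB.eq]
  congr 1
  simp [Complex.ext_iff]

lemma psd_nonneg_smul {P : Matrix n n ℂ} (hP : P.PosSemidef) {c : ℝ} (hc : 0 ≤ c) :
    (((c : ℝ) : ℂ) • P).PosSemidef := by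
  refine PosSemidef.of_dotProduct_mulVec_nonneg ?_ ?_
  · show (((c:ℝ):ℂ) • P).conjTranspose = _
    rw [conjTranspose_smul]
    rw [hP.1.eq]
    congr 1
    simp [Complex.ext_iff]
  · intro x
    rw [smul_mulVec, dotProduct_smul]
    exact smul_nonneg (by rw [Complex.zero_le_real]; exact hc) (hP.dotProduct_mulVec_nonneg x)

lemma psd_sub_smul_one {B : Matrix n n ℂ} (hB : B.IsHermitian) {c : ℝ}
    (h : ∀ i, c ≤ hB.eigenvalues i) :
    (B - ((c : ℂ) • 1 : Matrix n n ℂ)).PosSemidef := by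
  have h1 : B - ((c : ℂ) • 1 : Matrix n n ℂ)
      = (hB.eigenvectorUnitary : Matrix n n ℂ)
        * diagonal (fun i => ((hB.eigenvalues i - c : ℝ) : ℂ))
        * star (hB.eigenvectorUnitary : Matrix n n ℂ) := by
    conv_lhs => rw [hB.spectral_theorem, Unitary.conjStarAlgAut_apply, smul_one_conj hB.eigenvectorUnitary (c : ℂ)]
    rw [← sub_mul, ← mul_sub]
    congr 1
    congr 1
    ext i j
    by_cases hij : i = j <;>
      simp [hij, diagonal_apply, Matrix.one_apply, Matrix.smul_apply, Complex.ofReal_sub]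
  rw [h1]
  exact conj_psd_diag _ fun i => by linarith [h i]

lemma psd_const_smul_one {c : ℝ} (hc : 0 ≤ c) : (((c : ℝ) : ℂ) • 1 : Matrix n n ℂ).PosSemidef := by
  have h : (((c : ℝ) : ℂ) • 1 : Matrix n n ℂ) = diagonal (fun _ : n => ((c : ℝ) : ℂ)) := by
    ext i j
    by_cases hij : i = j <;> simp [hij, Matrix.one_apply, diagonal_apply]
  rw [h]
  exact posSemidef_diagonal_iff.mpr fun i => by rw [Complex.zero_le_real]; exact hc

lemma re_trace_conj_diag (U : Matrix.unitaryGroup n ℂ) (d : n → ℝ) :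
    ((((U : Matrix n n ℂ) * diagonal (fun i => ((d i : ℝ) : ℂ)) * star (U : Matrix n n ℂ)).trace)).re
      = ∑ i, d i := by
  rw [trace_conj_diag]
  rw [Complex.re_sum]
  simp

lemma re_trace_conj_diag_mul (U : Matrix.unitaryGroup n ℂ) (d : n → ℝ) (B : Matrix n n ℂ) :
    (((((U : Matrix n n ℂ) * diagonal (fun i => ((d i : ℝ) : ℂ)) * star (U : Matrix n n ℂ)) * B).trace)).re
      = ∑ i, d i * ((star (U : Matrix n n ℂ) * B * (U : Matrix n n ℂ)) i i).re := by
  rw [trace_conj_diag_mul, Complex.re_sum]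
  refine Finset.sum_congr rfl fun i _ => ?_
  rw [Complex.mul_re]
  simp

lemma isHermitian_cfc {X : Matrix n n ℂ} (hX : X.IsHermitian) (f : ℝ → ℝ) :
    (cfc f X).IsHermitian := by
  rw [cfc_spectral hX f]
  show (_ : Matrix n n ℂ).conjTranspose = _
  rw [conjTranspose_mul, conjTranspose_mul, diagonal_conjTranspose]
  rw [← Matrix.star_eq_conjTranspose, ← Matrix.star_eq_conjTranspose, star_star, mul_assoc]
  congr 1
  congr 1
  ext i
  simp [Pi.star_def]
-- appended on top of all.lean
section Key
variable [Nonempty n]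

lemma key_eig_bounds {A B : Matrix n n ℂ} (hA : A.IsHermitian) (hB : B.IsHermitian)
    {a b K : ℝ} (hK0 : 0 ≤ K)
    (hK1 : (((K : ℂ) • 1 : Matrix n n ℂ) - B).PosSemidef)
    (hK2 : (((K : ℂ) • 1 : Matrix n n ℂ) + B).PosSemidef)
    (hAa : (A - ((a : ℂ) • 1 : Matrix n n ℂ)).PosSemidef)
    (hAb : (((b : ℂ) • 1 : Matrix n n ℂ) - A).PosSemidef)
    {t : ℝ} (htK : |t| * K ≤ a / 2) (hXt : (A + t • B).IsHermitian) (i : n) :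
    hXt.eigenvalues i ∈ Set.Icc (a/2) (b + a/2) := by
  have hpsd1 : (((|t| * K : ℝ) : ℂ) • 1 + (t : ℂ) • B : Matrix n n ℂ).PosSemidef := by
    rcases le_or_gt 0 t with ht | ht
    · have heq : (((|t| * K : ℝ) : ℂ) • 1 + (t : ℂ) • B : Matrix n n ℂ)
          = ((t : ℝ) : ℂ) • ((((K : ℝ) : ℂ) • 1 : Matrix n n ℂ) + B) := by
        rw [abs_of_nonneg ht]
        push_cast
        module
      rw [heq]
      exact psd_nonneg_smul hK2 ht
    · have heq : (((|t| * K : ℝ) : ℂ) • 1 + (t : ℂ) • B : Matrix n n ℂ)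
          = ((-t : ℝ) : ℂ) • ((((K : ℝ) : ℂ) • 1 : Matrix n n ℂ) - B) := by
        rw [abs_of_neg ht]
        push_cast
        module
      rw [heq]
      exact psd_nonneg_smul hK1 (by linarith)
  have hpsd2 : (((|t| * K : ℝ) : ℂ) • 1 - (t : ℂ) • B : Matrix n n ℂ).PosSemidef := by
    rcases le_or_gt 0 t with ht | ht
    · have heq : (((|t| * K : ℝ) : ℂ) • 1 - (t : ℂ) • B : Matrix n n ℂ)
          = ((t : ℝ) : ℂ) • ((((K : ℝ) : ℂ) • 1 : Matrix n n ℂ) - B) := by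
        rw [abs_of_nonneg ht]
        push_cast
        module
      rw [heq]
      exact psd_nonneg_smul hK1 ht
    · have heq : (((|t| * K : ℝ) : ℂ) • 1 - (t : ℂ) • B : Matrix n n ℂ)
          = ((-t : ℝ) : ℂ) • ((((K : ℝ) : ℂ) • 1 : Matrix n n ℂ) + B) := by
        rw [abs_of_neg ht]
        push_cast
        module
      rw [heq]
      exact psd_nonneg_smul hK2 (by linarith)
  have hrest : 0 ≤ a / 2 - |t| * K := by linarith
  constructor
  · refine eig_ge_of_psd hXt ?_ i
    have heq : A + t • B - (((a/2 : ℝ) : ℂ) • 1 : Matrix n n ℂ)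
        = (A - ((a : ℂ) • 1 : Matrix n n ℂ))
          + ((((|t| * K : ℝ) : ℂ) • 1 + (t : ℂ) • B : Matrix n n ℂ))
          + (((a/2 - |t| * K : ℝ) : ℂ) • 1 : Matrix n n ℂ) := by
      rw [real_smul_matrix t B]
      push_cast
      module
    rw [show ((a/2 : ℝ) : ℂ) = (((a/2 : ℝ) : ℝ) : ℂ) by norm_num] at heq
    rw [heq]
    exact (hAa.add hpsd1).add (psd_const_smul_one hrest)
  · refine eig_le_of_psd hXt ?_ i
    have heq : (((b + a/2 : ℝ) : ℂ) • 1 : Matrix n n ℂ) - (A + t • B)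
        = ((((b : ℝ) : ℂ) • 1 : Matrix n n ℂ) - A)
          + ((((|t| * K : ℝ) : ℂ) • 1 - (t : ℂ) • B : Matrix n n ℂ))
          + (((a/2 - |t| * K : ℝ) : ℂ) • 1 : Matrix n n ℂ) := by
      rw [real_smul_matrix t B]
      push_cast
      module
    rw [heq]
    exact (hAb.add hpsd2).add (psd_const_smul_one hrest)

end Key

lemma cfc_trace_sum {X : Matrix n n ℂ} (hX : X.IsHermitian) (f : ℝ → ℝ) :
    ((cfc f X).trace).re = ∑ i, f (hX.eigenvalues i) := by
  rw [cfc_spectral hX f, re_trace_conj_diag hX.eigenvectorUnitary (fun i => f (hX.eigenvalues i))]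

lemma aeval_trace_sum {X : Matrix n n ℂ} (hX : X.IsHermitian) (Q : ℝ[X]) :
    (((aeval X) Q).trace).re = ∑ i, Q.eval (hX.eigenvalues i) := by
  rw [aeval_spectral hX Q, re_trace_conj_diag hX.eigenvectorUnitary (fun i => Q.eval (hX.eigenvalues i))]

lemma cfc_trace_mul_sum {X : Matrix n n ℂ} (hX : X.IsHermitian) (f : ℝ → ℝ) (B : Matrix n n ℂ) :
    ((cfc f X * B).trace).re = ∑ i, f (hX.eigenvalues i) *
      ((star (hX.eigenvectorUnitary : Matrix n n ℂ) * B * (hX.eigenvectorUnitary : Matrix n n ℂ)) i i).re := by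
  rw [cfc_spectral hX f, re_trace_conj_diag_mul hX.eigenvectorUnitary (fun i => f (hX.eigenvalues i))]

lemma aeval_trace_mul_sum {X : Matrix n n ℂ} (hX : X.IsHermitian) (Q : ℝ[X]) (B : Matrix n n ℂ) :
    (((aeval X) Q * B).trace).re = ∑ i, Q.eval (hX.eigenvalues i) *
      ((star (hX.eigenvectorUnitary : Matrix n n ℂ) * B * (hX.eigenvectorUnitary : Matrix n n ℂ)) i i).re := by
  rw [aeval_spectral hX Q, re_trace_conj_diag_mul hX.eigenvectorUnitary (fun i => Q.eval (hX.eigenvalues i))]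

lemma sum_bound {d c : n → ℝ} {ε K : ℝ} (hε : 0 ≤ ε) (hd : ∀ i, |d i| ≤ ε) (hc : ∀ i, |c i| ≤ K) :
    |∑ i, d i * c i| ≤ (Fintype.card n : ℝ) * (ε * K) := by
  calc |∑ i, d i * c i| ≤ ∑ i, |d i * c i| := Finset.abs_sum_le_sum_abs _ _
    _ ≤ ∑ _i : n, ε * K := by
        refine Finset.sum_le_sum fun i _ => ?_
        rw [abs_mul]
        exact mul_le_mul (hd i) (hc i) (abs_nonneg _) hε
    _ = (Fintype.card n : ℝ) * (ε * K) := by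
        rw [Finset.sum_const, Finset.card_univ, nsmul_eq_mul]

section KeyDeriv
variable [Nonempty n]

lemma key_deriv {A B : Matrix n n ℂ} (hA : A.PosDef) (hB : B.IsHermitian)
    {α : ℝ} (hα : 0 < α) :
    HasDerivAt (fun t : ℝ => ((cfc (fun x : ℝ => x ^ α) (A + t • B)).trace).re)
      (α * ((cfc (fun x : ℝ => x ^ (α - 1)) A * B).trace).re) 0 := by
  classical
  have hUnn : (Finset.univ : Finset n).Nonempty := Finset.univ_nonempty
  set a := Finset.univ.inf' hUnn hA.1.eigenvalues with hadef
  set b := Finset.univ.sup' hUnn hA.1.eigenvalues with hbdef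
  have ha : 0 < a := by
    rw [hadef]
    exact (Finset.lt_inf'_iff hUnn).mpr fun i _ => hA.eigenvalues_pos i
  have hal : ∀ i, a ≤ hA.1.eigenvalues i := fun i => by
    rw [hadef]; exact Finset.inf'_le _ (Finset.mem_univ i)
  have hbl : ∀ i, hA.1.eigenvalues i ≤ b := fun i => by
    rw [hbdef]; exact Finset.le_sup' _ (Finset.mem_univ i)
  have hab : a ≤ b := le_trans (hal (Classical.arbitrary n)) (hbl _)
  set K := Finset.univ.sup' hUnn (fun i => |hB.eigenvalues i|) with hKdef
  have hKl : ∀ i, |hB.eigenvalues i| ≤ K := fun i => by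
    rw [hKdef]; exact Finset.le_sup' (fun i => |hB.eigenvalues i|) (Finset.mem_univ i)
  have hK0 : 0 ≤ K := le_trans (abs_nonneg _) (hKl (Classical.arbitrary n))
  have hK1 : (((K : ℂ) • 1 : Matrix n n ℂ) - B).PosSemidef :=
    psd_smul_one_sub hB fun i => le_trans (le_abs_self _) (hKl i)
  have hK2 : (((K : ℂ) • 1 : Matrix n n ℂ) + B).PosSemidef :=
    psd_smul_one_add hB fun i => by
      have := hKl i; rw [abs_le] at this; linarith [this.1]
  have hAa : (A - ((a : ℂ) • 1 : Matrix n n ℂ)).PosSemidef := psd_sub_smul_one hA.1 hal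
  have hAb : (((b : ℂ) • 1 : Matrix n n ℂ) - A).PosSemidef := psd_smul_one_sub hA.1 hbl
  set δ := a / (2 * (K + 1)) with hδdef
  have hδ : 0 < δ := by positivity
  have hδK : ∀ t : ℝ, |t| < δ → |t| * K ≤ a / 2 := by
    intro t ht
    have h1 : |t| * K ≤ δ * K := mul_le_mul_of_nonneg_right ht.le hK0
    have h2 : δ * K ≤ a / 2 := by
      rw [hδdef, div_mul_eq_mul_div, div_le_div_iff₀ (by positivity) (by norm_num : (0:ℝ) < 2)]
      nlinarith
    linarith
  set m := a / 2 with hmdef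
  set L := b + a / 2 with hLdef
  have hm : 0 < m := by positivity
  have hmIcc : m ∈ Set.Icc m L := ⟨le_refl m, by rw [hmdef, hLdef]; linarith⟩
  set s := Set.Ioo (-δ) δ with hsdef
  have hmem : ∀ t ∈ s, |t| < δ := fun t ht => abs_lt.mpr ⟨ht.1, ht.2⟩
  have hXh : ∀ t : ℝ, (A + t • B).IsHermitian := fun t => hA.1.add (isHermitian_real_smul hB t)
  have heig : ∀ t ∈ s, ∀ i, (hXh t).eigenvalues i ∈ Set.Icc m L := fun t ht i =>
    key_eig_bounds hA.1 hB hK0 hK1 hK2 hAa hAb (hδK t (hmem t ht)) (hXh t) i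
  set f : ℝ → ℝ := fun x => x ^ α with hfdef
  set fd : ℝ → ℝ := fun x => α * x ^ (α - 1) with hfddef
  have hfder : ∀ x ∈ Set.Icc m L, HasDerivAt f (fd x) x := fun x hx => by
    simpa [hfddef] using
      Real.hasDerivAt_rpow_const (x := x) (p := α) (Or.inl (ne_of_gt (lt_of_lt_of_le hm hx.1)))
  have hfdcont : ContinuousOn fd (Set.Icc m L) := fun x hx => by
    have hx0 : x ≠ 0 := ne_of_gt (lt_of_lt_of_le hm hx.1)
    exact (continuousAt_const.mul
      (Real.continuousAt_rpow_const x (α - 1) (Or.inl hx0))).continuousWithinAt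
  have hsel : ∀ j : ℕ, ∃ Q : ℝ[X],
      ∀ x ∈ Set.Icc m L, |(derivative Q).eval x - fd x| ≤ 1 / ((j : ℝ) + 1) := by
    intro j
    obtain ⟨q, hq⟩ := exists_polynomial_near_of_continuousOn m L fd hfdcont
      (1 / ((j : ℝ) + 1)) (by positivity)
    obtain ⟨Qa, hQa⟩ := exists_antideriv q
    exact ⟨Qa, fun x hx => by rw [hQa]; exact (hq x hx).le⟩
  choose Q hQ using hsel
  set F : ℕ → ℝ → ℝ := fun j t =>
    (((aeval (A + t • B)) (Q j)).trace).re + (f m - (Q j).eval m) * (Fintype.card n : ℝ) with hFdef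
  set F' : ℕ → ℝ → ℝ := fun j t =>
    (((aeval (A + t • B)) (derivative (Q j)) * B).trace).re with hF'def
  set g : ℝ → ℝ := fun t => ((cfc f (A + t • B)).trace).re with hgdef
  set h : ℝ → ℝ := fun t => ((cfc fd (A + t • B) * B).trace).re with hhdef
  -- pointwise convergence
  have hptw : ∀ t ∈ s, Filter.Tendsto (fun j => F j t) Filter.atTop (nhds (g t)) := by
    intro t ht
    have hbnd : ∀ j : ℕ, |F j t - g t| ≤ (Fintype.card n : ℝ) * ((1 / ((j : ℝ) + 1)) * (L - m)) := by
      intro j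
      have hFt : F j t = ∑ i, ((Q j).eval ((hXh t).eigenvalues i) + (f m - (Q j).eval m)) := by
        rw [hFdef]
        simp only []
        rw [aeval_trace_sum (hXh t), Finset.sum_add_distrib, Finset.sum_const,
          Finset.card_univ, nsmul_eq_mul]
        ring
      have hgt : g t = ∑ i, f ((hXh t).eigenvalues i) := by
        rw [hgdef]
        simp only []
        rw [cfc_trace_sum (hXh t)]
      rw [hFt, hgt, ← Finset.sum_sub_distrib]
      calc |∑ i, (((Q j).eval ((hXh t).eigenvalues i) + (f m - (Q j).eval m))
              - f ((hXh t).eigenvalues i))|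
          ≤ ∑ i, |((Q j).eval ((hXh t).eigenvalues i) + (f m - (Q j).eval m))
              - f ((hXh t).eigenvalues i)| := Finset.abs_sum_le_sum_abs _ _
        _ ≤ ∑ _i : n, (1 / ((j : ℝ) + 1)) * (L - m) := by
            refine Finset.sum_le_sum fun i _ => ?_
            exact mvt_bound (Q j) hfder (hQ j) (heig t ht i) hmIcc
        _ = (Fintype.card n : ℝ) * ((1 / ((j : ℝ) + 1)) * (L - m)) := by
            rw [Finset.sum_const, Finset.card_univ, nsmul_eq_mul]
    have hlim : Filter.Tendsto
        (fun j : ℕ => (Fintype.card n : ℝ) * ((1 / ((j : ℝ) + 1)) * (L - m)))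
        Filter.atTop (nhds 0) := by
      have h1 := tendsto_one_div_add_atTop_nhds_zero_nat (𝕜 := ℝ)
      have h2 := (h1.mul_const (L - m)).const_mul (Fintype.card n : ℝ)
      simpa using h2
    rw [tendsto_iff_dist_tendsto_zero]
    refine squeeze_zero (fun j => dist_nonneg) (fun j => ?_) hlim
    rw [Real.dist_eq]
    exact hbnd j
  -- uniform convergence of derivatives
  have huni : TendstoUniformlyOn F' h Filter.atTop s := by
    rw [Metric.tendstoUniformlyOn_iff]
    intro ε hε
    have hlim : Filter.Tendsto
        (fun j : ℕ => (Fintype.card n : ℝ) * ((1 / ((j : ℝ) + 1)) * K))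
        Filter.atTop (nhds 0) := by
      have h1 := tendsto_one_div_add_atTop_nhds_zero_nat (𝕜 := ℝ)
      have h2 := (h1.mul_const K).const_mul (Fintype.card n : ℝ)
      simpa using h2
    filter_upwards [hlim.eventually (gt_mem_nhds hε)] with j hj t ht
    have hbnd : |h t - F' j t| ≤ (Fintype.card n : ℝ) * ((1 / ((j : ℝ) + 1)) * K) := by
      have hht : h t = ∑ i, fd ((hXh t).eigenvalues i) *
          ((star ((hXh t).eigenvectorUnitary : Matrix n n ℂ) * B *
            ((hXh t).eigenvectorUnitary : Matrix n n ℂ)) i i).re := by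
        rw [hhdef]
        simp only []
        rw [cfc_trace_mul_sum (hXh t)]
      have hF't : F' j t = ∑ i, (derivative (Q j)).eval ((hXh t).eigenvalues i) *
          ((star ((hXh t).eigenvectorUnitary : Matrix n n ℂ) * B *
            ((hXh t).eigenvectorUnitary : Matrix n n ℂ)) i i).re := by
        rw [hF'def]
        simp only []
        rw [aeval_trace_mul_sum (hXh t)]
      rw [hht, hF't, ← Finset.sum_sub_distrib]
      have heq : ∀ i, fd ((hXh t).eigenvalues i) *
            ((star ((hXh t).eigenvectorUnitary : Matrix n n ℂ) * B *
              ((hXh t).eigenvectorUnitary : Matrix n n ℂ)) i i).re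
          - (derivative (Q j)).eval ((hXh t).eigenvalues i) *
            ((star ((hXh t).eigenvectorUnitary : Matrix n n ℂ) * B *
              ((hXh t).eigenvectorUnitary : Matrix n n ℂ)) i i).re
          = (fd ((hXh t).eigenvalues i) - (derivative (Q j)).eval ((hXh t).eigenvalues i)) *
            ((star ((hXh t).eigenvectorUnitary : Matrix n n ℂ) * B *
              ((hXh t).eigenvectorUnitary : Matrix n n ℂ)) i i).re := fun i => by ring
      rw [Finset.sum_congr rfl fun i _ => heq i]
      refine sum_bound (by positivity) (fun i => ?_) (fun i => ?_)
      · rw [abs_sub_comm]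
        exact hQ j _ (heig t ht i)
      · exact conj_diag_entry_bound hK1 hK2 _ i
    rw [Real.dist_eq]
    exact lt_of_le_of_lt hbnd hj
  have hFd : ∀ᶠ j in Filter.atTop, ∀ t ∈ s, HasDerivAt (F j) (F' j t) t :=
    Filter.Eventually.of_forall fun j t _ =>
      (hasDerivAt_trace_aeval A B (Q j) t).add_const _
  have hmem0 : (0 : ℝ) ∈ s := ⟨by linarith, hδ⟩
  have hg : HasDerivAt g (h 0) 0 :=
    hasDerivAt_of_tendstoUniformlyOn isOpen_Ioo huni hFd hptw hmem0
  convert hg using 1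
  have h00 : A + (0 : ℝ) • B = A := by simp
  rw [hhdef]
  simp only [h00]
  rw [cfc_trace_mul_sum hA.1, cfc_trace_mul_sum hA.1, Finset.mul_sum]
  refine Finset.sum_congr rfl fun i _ => ?_
  rw [hfddef]
  ring

end KeyDeriv

lemma posdef_conj_diag (U : Matrix.unitaryGroup n ℂ) {d : n → ℝ} (hd : ∀ i, 0 < d i) :
    ((U : Matrix n n ℂ) * diagonal (fun i => ((d i : ℝ) : ℂ)) * star (U : Matrix n n ℂ)).PosDef := by
  refine .of_dotProduct_mulVec_pos (conj_psd_diag U fun i => (hd i).le).1 fun x hx => ?_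
  have hdiag : (diagonal (fun i => ((d i : ℝ) : ℂ)) : Matrix n n ℂ).PosDef :=
    posDef_diagonal_iff.mpr fun i => by
      rw [Complex.zero_lt_real]; exact hd i
  set y := star (U : Matrix n n ℂ) *ᵥ x with hy
  have hy0 : y ≠ 0 := by
    intro h0
    apply hx
    have : (U : Matrix n n ℂ) *ᵥ y = x := by
      rw [hy, mulVec_mulVec, mem_unitaryGroup_iff.mp U.2, one_mulVec]
    rw [← this, h0, mulVec_zero]
  have hquad : star x ⬝ᵥ (((U : Matrix n n ℂ) * diagonal (fun i => ((d i : ℝ) : ℂ)) * star (U : Matrix n n ℂ)) *ᵥ x)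
      = star y ⬝ᵥ (diagonal (fun i => ((d i : ℝ) : ℂ)) *ᵥ y) := by
    have hsy : star y = star x ᵥ* (U : Matrix n n ℂ) := by
      rw [hy, star_mulVec, ← Matrix.star_eq_conjTranspose, star_star]
    rw [← mulVec_mulVec, ← mulVec_mulVec, dotProduct_mulVec (star x), ← hsy, ← hy]
  rw [hquad]
  exact hdiag.dotProduct_mulVec_pos hy0

lemma conj_posdef_herm {S P : Matrix n n ℂ} (hS : S.IsHermitian) (hSu : IsUnit S)
    (hP : P.PosDef) : (S * P * S).PosDef := by
  refine PosDef.of_dotProduct_mulVec_pos ?_ ?_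
  · show (S * P * S).conjTranspose = _
    rw [conjTranspose_mul, conjTranspose_mul, hS.eq, hP.1.eq, mul_assoc]
  · intro x hx
    set y := S *ᵥ x with hy
    have hy0 : y ≠ 0 := fun h0 => hx (Matrix.mulVec_injective_iff_isUnit.mpr hSu
      (show S *ᵥ x = S *ᵥ 0 by rw [mulVec_zero, ← hy, h0]))
    have hquad : star x ⬝ᵥ ((S * P * S) *ᵥ x) = star y ⬝ᵥ (P *ᵥ y) := by
      have hsy : star y = star x ᵥ* S := by
        rw [hy, star_mulVec, hS.eq]
      rw [← mulVec_mulVec, ← mulVec_mulVec, dotProduct_mulVec (star x), ← hsy, ← hy]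
    rw [hquad]
    exact hP.dotProduct_mulVec_pos hy0

lemma cfc_posDef {σ : Matrix n n ℂ} (hσ : σ.PosDef) (γ : ℝ) :
    (cfc (fun x : ℝ => x ^ γ) σ).PosDef := by
  rw [cfc_spectral hσ.1]
  exact posdef_conj_diag _ fun i => Real.rpow_pos_of_pos (hσ.eigenvalues_pos i) γ

end Helpers

/-- The derivative of the sandwiched Rényi relative entropy in its first
argument: for `α > 0`, `α ≠ 1`, `γ = (1−α)/(2α)`, positive definite `ρ, σ` and Hermitian `M`,
the function `t ↦ D̃_α(ρ+tM, σ)` is differentiable at `t = 0` with derivative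
`(α/(α−1))·tr[(σ^γ ρ σ^γ)^α]⁻¹·tr(σ^γ (σ^γ ρ σ^γ)^{α−1} σ^γ M)`. -/
theorem sandwichedRenyi_first_arg_deriv
    {n : Type*} [Fintype n] [DecidableEq n] [Nonempty n]
    (α γ : ℝ) (hα : 0 < α) (hα1 : α ≠ 1) (hγ : γ = (1 - α) / (2 * α))
    (ρ σ M : Matrix n n ℂ) (hρ : ρ.PosDef) (hσ : σ.PosDef) (hM : M.IsHermitian) :
    HasDerivAt (fun t : ℝ => sandwichedRenyi α (ρ + t • M) σ)
      ((α / (α - 1)) * (((matPow (matPow σ γ * ρ * matPow σ γ) α).trace).re)⁻¹ *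
        ((matPow σ γ * matPow (matPow σ γ * ρ * matPow σ γ) (α - 1) * matPow σ γ * M).trace).re)
      0 := by
  subst hγ
  set S := matPow σ ((1 - α) / (2 * α)) with hSdef
  have hS : S.IsHermitian := isHermitian_cfc hσ.1 _
  have hSpd : S.PosDef := cfc_posDef hσ _
  set A := S * ρ * S with hAdef
  set B := S * M * S with hBdef
  have hA : A.PosDef := conj_posdef_herm hS hSpd.isUnit hρ
  have hB : B.IsHermitian := by
    show Bᴴ = B
    rw [hBdef, conjTranspose_mul, conjTranspose_mul, hS.eq, hM.eq, mul_assoc]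
  have hα1' : α - 1 ≠ 0 := sub_ne_zero.mpr hα1
  have hpath : ∀ t : ℝ, S * (ρ + t • M) * S = A + t • B := by
    intro t
    rw [hAdef, hBdef, mul_add, add_mul, mul_smul_comm, smul_mul_assoc]
  have hkey := key_deriv (B := B) hA hB hα
  have hg00 : A + (0 : ℝ) • B = A := by simp
  have hg0 : 0 < ((cfc (fun x : ℝ => x ^ α) (A + (0 : ℝ) • B)).trace).re := by
    rw [hg00, cfc_trace_sum hA.1]
    exact Finset.sum_pos (fun i _ => Real.rpow_pos_of_pos (hA.eigenvalues_pos i) α)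
      Finset.univ_nonempty
  have hlog := hkey.log (ne_of_gt hg0)
  have hfinal := hlog.const_mul ((α - 1)⁻¹)
  convert hfinal using 1
  · rfl
  · rfl
  · funext t
    have hmp : matPow (matPow σ ((1 - α) / (2 * α)) * (ρ + t • M) * matPow σ ((1 - α) / (2 * α))) α
        = cfc (fun x : ℝ => x ^ α) (A + t • B) := by
      rw [show matPow σ ((1 - α) / (2 * α)) = S from hSdef.symm, hpath t]
      rfl
    show (α - 1)⁻¹ * Real.log (((matPow (matPow σ ((1 - α) / (2 * α)) * (ρ + t • M)
        * matPow σ ((1 - α) / (2 * α))) α).trace).re) = _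
    rw [hmp]
  · have hG : ((cfc (fun x : ℝ => x ^ α) (A + (0 : ℝ) • B)).trace).re
        = ((matPow A α).trace).re := by rw [hg00]; rfl
    have hT : ((S * matPow A (α - 1) * S * M).trace)
        = ((cfc (fun x : ℝ => x ^ (α - 1)) A * B).trace) := by
      have e1 : cfc (fun x : ℝ => x ^ (α - 1)) A * B
          = (cfc (fun x : ℝ => x ^ (α - 1)) A * S) * M * S := by
        rw [hBdef]; noncomm_ring
      rw [e1, trace_mul_cycle (cfc (fun x : ℝ => x ^ (α - 1)) A * S) M S]
      congr 1
      show S * matPow A (α - 1) * S * M = S * (cfc (fun x : ℝ => x ^ (α - 1)) A * S) * M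
      rw [show matPow A (α - 1) = cfc (fun x : ℝ => x ^ (α - 1)) A from rfl]
      noncomm_ring
    have hT' : ((S * matPow A (α - 1) * S * M).trace).re
        = ((cfc (fun x : ℝ => x ^ (α - 1)) A * B).trace).re := by rw [hT]
    rw [hT', ← hG, div_eq_mul_inv, div_eq_mul_inv]
    ring
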